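/- For every partition λ with at most b parts and all real numbers q_1,…,q_c: ∑_{π} ∏_{(i,j) ∈ Des(π)} q_{π_{ij}} = g_λ(q_1,…,q_c), where the (finite) sum is over all plane partitions π of shape λ with entries at most c. Consequently, the g-measure of the set {π ∈ PP(∞,b,c) : sh(π) = λ} equals Z_{b,c}^{−1} g_λ(q_1,…,q_c). -/
import Mathlib


open scoped BigOperators

/-- A plane partition: a matrix of naturals (0-indexed) with weakly decreasing rows and
columns and finitely many nonzero entries. -/
structure PlanePartition where
  entry : ℕ → ℕ → ℕ
  row_decr : ∀ i j, entry i (j + 1) ≤ entry i j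
  col_decr : ∀ i j, entry (i + 1) j ≤ entry i j
  finite_support : {p : ℕ × ℕ | entry p.1 p.2 ≠ 0}.Finite

namespace PlanePartition

/-- `π` has at most `b` (nonzero) rows. -/
def rowsLE (π : PlanePartition) (b : ℕ) : Prop := ∀ i j, b ≤ i → π.entry i j = 0

/-- `π` has at most `a` (nonzero) columns. -/
def colsLE (π : PlanePartition) (a : ℕ) : Prop := ∀ i j, a ≤ j → π.entry i j = 0

/-- all entries of `π` are at most `c`. -/
def entriesLE (π : PlanePartition) (c : ℕ) : Prop := ∀ i j, π.entry i j ≤ c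

/-- the number of columns of `π` containing the entry `ℓ`. -/
noncomputable def cCol (π : PlanePartition) (ℓ : ℕ) : ℕ :=
  {j | ∃ i, π.entry i j = ℓ}.ncard

/-- the length of the `i`-th row of `π` (0-indexed); this is the `(i+1)`-st part of
the shape of `π`. -/
noncomputable def rowLen (π : PlanePartition) (i : ℕ) : ℕ :=
  {j | 0 < π.entry i j}.ncard

/-- `d_{iℓ} = #{j : π_{ij} = ℓ > π_{i+1,j}}`; the row index `i` is 0-indexed
while `ℓ` denotes the actual value. -/
noncomputable def phi (π : PlanePartition) (i ℓ : ℕ) : ℕ :=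
  {j | π.entry i j = ℓ ∧ π.entry (i + 1) j < ℓ}.ncard

/-- `Φ(π)` as a 0-indexed matrix: entry `(i, l)` counts `j` with `π_{ij} = l+1 > π_{i+1,j}`. -/
noncomputable def phiMatrix (π : PlanePartition) : ℕ → ℕ → ℕ :=
  fun i l => π.phi i (l + 1)

/-- `π` has shape `μ`. -/
def hasShape (π : PlanePartition) (μ : YoungDiagram) : Prop :=
  ∀ i j, 0 < π.entry i j ↔ (i, j) ∈ μ

/-- the descent set of `π` (0-indexed positions). -/
def des (π : PlanePartition) : Set (ℕ × ℕ) :=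
  {p | π.entry (p.1 + 1) p.2 < π.entry p.1 p.2}

end PlanePartition

/-- the set of plane partitions with at most `a` columns, at most `b` rows
and entries at most `c`. -/
def PP (a b c : ℕ) : Set PlanePartition :=
  {π | π.colsLE a ∧ π.rowsLE b ∧ π.entriesLE c}

/-- `PP(∞, b, c)`: plane partitions with at most `b` rows and entries at most `c`. -/
def PPinf (b c : ℕ) : Set PlanePartition :=
  {π | π.rowsLE b ∧ π.entriesLE c}

/-- a monotone lattice path (as a list of points) from `s` to `t`. -/
def IsMonPath (L : List (ℕ × ℕ)) (s t : ℕ × ℕ) : Prop :=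
  L.head? = some s ∧ L.getLast? = some t ∧
    L.Chain' fun p q => q = (p.1 + 1, p.2) ∨ q = (p.1, p.2 + 1)

/-- the last passage time: the maximal weight of a monotone path from `s` to `t`
in the matrix `d`. -/
noncomputable def lastPassage (d : ℕ → ℕ → ℕ) (s t : ℕ × ℕ) : ℕ :=
  sSup {n | ∃ L, IsMonPath L s t ∧ n = (L.map fun p => d p.1 p.2).sum}

/-- `b×c` matrices of naturals (as functions vanishing off `[0,b) × [0,c)`) whose
last passage time `G(b,c)` is at most `a`. -/
def BM (a b c : ℕ) : Set (ℕ → ℕ → ℕ) :=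
  {d | (∀ i j, b ≤ i → d i j = 0) ∧ (∀ i j, c ≤ j → d i j = 0) ∧
    lastPassage d (0, 0) (b - 1, c - 1) ≤ a}

/-- the rectangular Young diagram of the partition `(a^b)` (with `b` rows of length `a`). -/
def rectDiagram (a b : ℕ) : YoungDiagram where
  cells := Finset.range b ×ˢ Finset.range a
  isLowerSet := by
    intro p q hle hp
    simp only [Finset.coe_product, Set.mem_prod, Finset.mem_coe, Finset.mem_range] at hp ⊢
    exact ⟨lt_of_le_of_lt hle.1 hp.1, lt_of_le_of_lt hle.2 hp.2⟩

/-- the variables `(1^b, x_1, x_2, …)`: the first `b` variables are specialized to `1`. -/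
def oneExtend (b : ℕ) (x : ℕ → ℝ) : ℕ → ℝ :=
  fun i => if i < b then 1 else x (i - b)

/-- the Schur polynomial `s_μ(x_1, …, x_N)` evaluated at real arguments;
variables are 0-indexed (`x ℓ` is the variable `x_{ℓ+1}`), as are tableau entries. -/
noncomputable def schur (μ : YoungDiagram) (N : ℕ) (x : ℕ → ℝ) : ℝ :=
  ∑ᶠ T ∈ {T : SemistandardYoungTableau μ | ∀ i j, (i, j) ∈ μ → T i j < N},
    ∏ p ∈ μ.cells, x (T p.1 p.2)

/-- the dual symmetric Grothendieck polynomial `g_μ(x_1, …, x_n)` evaluated at real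
arguments; variables are 0-indexed (`x ℓ` is the variable `x_{ℓ+1}`). -/
noncomputable def grothG (μ : YoungDiagram) (n : ℕ) (x : ℕ → ℝ) : ℝ :=
  ∑ᶠ π ∈ {π : PlanePartition | π.hasShape μ ∧ π.entriesLE n},
    ∏ ℓ ∈ Finset.range n, x ℓ ^ π.cCol (ℓ + 1)

/-- the elementary symmetric polynomial `e_m(x_1, …, x_n)` evaluated at real arguments. -/
noncomputable def esym (n : ℕ) (x : ℕ → ℝ) (m : ℕ) : ℝ :=
  ∑ S ∈ (Finset.range n).powersetCard m, ∏ i ∈ S, x i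

/-- `e_m` for an integer index `m`, with `e_m = 0` for `m < 0`. -/
noncomputable def esymZ (n : ℕ) (x : ℕ → ℝ) (m : ℤ) : ℝ :=
  if 0 ≤ m then esym n x m.toNat else 0

/-- the weight `∏_{(i,j) ∈ Des(π)} q_{π_{ij}}`; the parameters are 0-indexed
(`q ℓ` is the parameter `q_{ℓ+1}`). -/
noncomputable def desWeight (π : PlanePartition) (q : ℕ → ℝ) : ℝ :=
  ∏ᶠ p ∈ π.des, q (π.entry p.1 p.2 - 1)

/-- the probability of a configuration `w` of a `b×c` matrix of i.i.d. Geom(q) entries,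
where `P(entry = k) = (1-q) qᵏ`. -/
noncomputable def geomWeight (q : ℝ) (b c : ℕ) (w : Fin b × Fin c → ℕ) : ℝ :=
  ∏ p : Fin b × Fin c, ((1 - q) * q ^ w p)

/-- extend a `b×c` matrix to an `ℕ × ℕ`-indexed matrix by zero. -/
def matExt {b c : ℕ} (w : Fin b × Fin c → ℕ) : ℕ → ℕ → ℕ :=
  fun i j => if h : i < b ∧ j < c then w (⟨i, h.1⟩, ⟨j, h.2⟩) else 0


namespace PlanePartition

lemma col_antitone (π : PlanePartition) (j : ℕ) : Antitone (fun i => π.entry i j) :=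
  antitone_nat_of_succ_le (fun i => π.col_decr i j)

lemma des_finite (π : PlanePartition) : π.des.Finite := by
  apply π.finite_support.subset
  intro p hp
  simp only [des, Set.mem_setOf_eq] at hp ⊢
  omega

lemma des_bijOn (π : PlanePartition) (m : ℕ) (hm : 0 < m) :
    Set.BijOn Prod.snd {p | p ∈ π.des ∧ π.entry p.1 p.2 = m}
      {j | ∃ i, π.entry i j = m} := by
  refine ⟨?_, ?_, ?_⟩
  · rintro ⟨i, j⟩ ⟨_, he⟩
    exact ⟨i, he⟩
  · rintro ⟨i, j⟩ ⟨hd, he⟩ ⟨i', j'⟩ ⟨hd', he'⟩ hj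
    simp only [Prod.snd] at hj
    subst hj
    simp only [des, Set.mem_setOf_eq] at hd hd'
    dsimp only at he he'
    rcases lt_trichotomy i i' with h | h | h
    · exfalso
      have : π.entry i' j ≤ π.entry (i + 1) j := π.col_antitone j h
      omega
    · simp [h]
    · exfalso
      have : π.entry i j ≤ π.entry (i' + 1) j := π.col_antitone j h
      omega
  · rintro j ⟨i, hi⟩
    have hSfin : {i | π.entry i j = m}.Finite := by
      have : {i | π.entry i j = m} ⊆ (fun i => ((i, j) : ℕ × ℕ)) ⁻¹'
          {p : ℕ × ℕ | π.entry p.1 p.2 ≠ 0} := by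
        intro i hi'
        simp only [Set.mem_setOf_eq] at hi'
        simp only [Set.mem_preimage, Set.mem_setOf_eq]
        omega
      exact (π.finite_support.preimage
        (fun a _ b _ h => by simpa using congrArg Prod.fst h)).subset this
    have hne : hSfin.toFinset.Nonempty := ⟨i, by simp [hi]⟩
    set i0 := hSfin.toFinset.max' hne with hi0
    have hi0m : π.entry i0 j = m := by
      have := hSfin.toFinset.max'_mem hne
      simpa using this
    have hlt : π.entry (i0 + 1) j < m := by
      rcases lt_or_eq_of_le (hi0m ▸ π.col_decr i0 j) with h | h
      · exact h
      · exfalso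
        have : i0 + 1 ∈ hSfin.toFinset := by simp [h]
        have := hSfin.toFinset.le_max' _ this
        omega
    exact ⟨(i0, j), ⟨by simpa [des] using hi0m ▸ hlt, hi0m⟩, rfl⟩

lemma des_card_eq_cCol (π : PlanePartition) (m : ℕ) (hm : 0 < m) :
    {p | p ∈ π.des ∧ π.entry p.1 p.2 = m}.ncard = π.cCol m := by
  rw [cCol, ← (π.des_bijOn m hm).image_eq,
    Set.ncard_image_of_injOn (π.des_bijOn m hm).injOn]

lemma rowsLE_of_hasShape (π : PlanePartition) (μ : YoungDiagram) (b : ℕ)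
    (hsh : π.hasShape μ) (hμ : μ.colLen 0 ≤ b) : π.rowsLE b := by
  intro i j hbi
  by_contra h
  have hmem : (i, j) ∈ μ := (hsh i j).mp (Nat.pos_of_ne_zero h)
  have hmem0 : (i, 0) ∈ μ := μ.up_left_mem le_rfl (Nat.zero_le _) hmem
  have := YoungDiagram.mem_iff_lt_colLen.mp hmem0
  omega

end PlanePartition

lemma desWeight_eq_monomial (π : PlanePartition) (c : ℕ) (hc : π.entriesLE c)
    (q : ℕ → ℝ) :
    desWeight π q = ∏ ℓ ∈ Finset.range c, q ℓ ^ π.cCol (ℓ + 1) := by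
  classical
  unfold desWeight
  set D := π.des_finite.toFinset with hD
  have hcoe : π.des = ↑D := (π.des_finite.coe_toFinset).symm
  rw [hcoe, finprod_mem_coe_finset]
  have hmaps : ∀ p ∈ D, π.entry p.1 p.2 - 1 ∈ Finset.range c := by
    intro p hp
    have hp' : p ∈ π.des := by
      simp only [hD, Set.Finite.mem_toFinset] at hp; exact hp
    simp only [PlanePartition.des, Set.mem_setOf_eq] at hp'
    have := hc p.1 p.2
    simp only [Finset.mem_range]
    omega
  rw [← Finset.prod_fiberwise_of_maps_to hmaps (fun p => q (π.entry p.1 p.2 - 1))]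
  refine Finset.prod_congr rfl (fun ℓ hℓ => ?_)
  have h1 : ∀ p ∈ D.filter (fun p => π.entry p.1 p.2 - 1 = ℓ),
      q (π.entry p.1 p.2 - 1) = q ℓ := by
    intro p hp
    rw [Finset.mem_filter] at hp
    rw [hp.2]
  rw [Finset.prod_congr rfl h1, Finset.prod_const]
  congr 1
  rw [← π.des_card_eq_cCol (ℓ + 1) (Nat.succ_pos ℓ)]
  have hset : {p | p ∈ π.des ∧ π.entry p.1 p.2 = ℓ + 1}
      = ↑(D.filter (fun p => π.entry p.1 p.2 - 1 = ℓ)) := by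
    ext p
    simp only [Set.mem_setOf_eq, Finset.coe_filter, hD, Set.Finite.mem_toFinset]
    constructor
    · rintro ⟨hd, he⟩; exact ⟨hd, by omega⟩
    · rintro ⟨hd, he⟩
      refine ⟨hd, ?_⟩
      simp only [PlanePartition.des, Set.mem_setOf_eq] at hd
      omega
  rw [hset, Set.ncard_coe_finset]

/-- for every partition `λ` with at most `b` parts and all real `q_1,…,q_c`,
`∑_π ∏_{(i,j) ∈ Des(π)} q_{π_{ij}} = g_λ(q_1,…,q_c)`, the sum over plane partitions of
shape `λ` with entries at most `c`; consequently the `g`-measure of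
`{π ∈ PP(∞,b,c) : sh(π) = λ}` equals `Z_{b,c}⁻¹ g_λ(q_1,…,q_c)`. -/
theorem gMeasure_shape (b c : ℕ) (hb : 0 < b) (hc : 0 < c) (μ : YoungDiagram)
    (hμ : μ.colLen 0 ≤ b) (q : ℕ → ℝ) :
    (∑ᶠ π ∈ {π : PlanePartition | π.hasShape μ ∧ π.entriesLE c}, desWeight π q
        = grothG μ c q) ∧
    (∏ i ∈ Finset.range c, (1 - q i)⁻¹ ^ b)⁻¹ *
        ∑ᶠ π ∈ {π ∈ PPinf b c | π.hasShape μ}, desWeight π q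
      = (∏ i ∈ Finset.range c, (1 - q i)⁻¹ ^ b)⁻¹ * grothG μ c q := by
  have h1 : ∑ᶠ π ∈ {π : PlanePartition | π.hasShape μ ∧ π.entriesLE c}, desWeight π q
      = grothG μ c q := by
    unfold grothG
    refine finsum_mem_congr rfl (fun π hπ => ?_)
    exact desWeight_eq_monomial π c hπ.2 q
  refine ⟨h1, ?_⟩
  have hset : {π ∈ PPinf b c | π.hasShape μ}
      = {π : PlanePartition | π.hasShape μ ∧ π.entriesLE c} := by
    ext π
    simp only [Set.mem_setOf_eq, PPinf]
    constructor
    · rintro ⟨⟨_, h2⟩, h3⟩; exact ⟨h3, h2⟩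
    · rintro ⟨h1', h2⟩
      exact ⟨⟨π.rowsLE_of_hasShape μ b h1' hμ, h2⟩, h1'⟩
  rw [hset, h1]
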